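/- Let G be a finite simple connected graph. Then the dominator chromatic number satisfies χ_d(G) = 2 if and only if there exist positive integers a and b such that G is isomorphic to the complete bipartite graph K_{a,b}. -/

import Mathlib

open SimpleGraph

section Defs

variable {V : Type*} (G : SimpleGraph V)

/-- `D` is a dominating set of `G`: every vertex outside `D` has a neighbor in `D`. -/
def IsDomSet (D : Set V) : Prop := ∀ v, v ∉ D → ∃ u ∈ D, G.Adj u v

/-- `D` is a total dominating set of `G`: every vertex has a neighbor in `D`. -/
def IsTotalDomSet (D : Set V) : Prop := ∀ v, ∃ u ∈ D, G.Adj u v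

/-- The domination number `γ(G)`. -/
noncomputable def domNum [Fintype V] : ℕ :=
  sInf {n | ∃ D : Set V, IsDomSet G D ∧ D.ncard = n}

/-- The total domination number `γ_t(G)`. -/
noncomputable def totalDomNum [Fintype V] : ℕ :=
  sInf {n | ∃ D : Set V, IsTotalDomSet G D ∧ D.ncard = n}

/-- `C` is a proper coloring of `G` with exactly `k` color classes:
a partition of the vertex set into `k` nonempty independent sets. -/
def IsProperColoring {k : ℕ} (C : Fin k → Set V) : Prop :=
  (∀ v, ∃! i, v ∈ C i) ∧ (∀ i, (C i).Nonempty) ∧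
    (∀ i, ∀ u ∈ C i, ∀ w ∈ C i, ¬ G.Adj u w)

/-- `v` dominates the color class `S`: every vertex of `S` is in the
closed neighborhood of `v`. -/
def DominatesClass (v : V) (S : Set V) : Prop := ∀ u ∈ S, u = v ∨ G.Adj v u

/-- A dominator coloring: a proper coloring in which every vertex dominates
at least one color class. -/
def IsDominatorColoring {k : ℕ} (C : Fin k → Set V) : Prop :=
  IsProperColoring G C ∧ ∀ v, ∃ i, DominatesClass G v (C i)

/-- A dominated coloring: a proper coloring in which every color class has a
dominating vertex, i.e. a vertex adjacent to every vertex of the class. -/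
def IsDominatedColoring {k : ℕ} (C : Fin k → Set V) : Prop :=
  IsProperColoring G C ∧ ∀ i, ∃ v, ∀ u ∈ C i, G.Adj v u

/-- The dominator chromatic number `χ_d(G)`. -/
noncomputable def domChromNum : ℕ :=
  sInf {k | ∃ C : Fin k → Set V, IsDominatorColoring G C}

/-- The dominated chromatic number `χ_dom(G)`. -/
noncomputable def dominatedChromNum : ℕ :=
  sInf {k | ∃ C : Fin k → Set V, IsDominatedColoring G C}

/-- `G` is a `D(k)` graph: `γ(G) = χ(G) = χ_d(G) = k`. -/
def IsDk [Fintype V] (k : ℕ) : Prop :=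
  domNum G = k ∧ G.chromaticNumber = (k : ℕ∞) ∧ domChromNum G = k

end Defs

/-- For a finite simple connected graph `G`, `χ_d(G) = 2` iff `G`
is isomorphic to a complete bipartite graph `K_{a,b}` with `a, b ≥ 1`. -/
theorem stmt_0 {V : Type*} [Fintype V] (G : SimpleGraph V) (hconn : G.Connected) :
    domChromNum G = 2 ↔
      ∃ a b : ℕ, 0 < a ∧ 0 < b ∧
        Nonempty (G ≃g completeBipartiteGraph (Fin a) (Fin b)) := by
  classical
  constructor
  · intro h
    -- extract a 2-class dominator coloring
    have hne : {k | ∃ C : Fin k → Set V, IsDominatorColoring G C}.Nonempty := by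
      by_contra h'
      rw [Set.not_nonempty_iff_eq_empty] at h'
      rw [domChromNum, h', Nat.sInf_empty] at h
      exact two_ne_zero h.symm
    have hmem : (2 : ℕ) ∈ {k | ∃ C : Fin k → Set V, IsDominatorColoring G C} := by
      rw [← h]; exact Nat.sInf_mem hne
    obtain ⟨C, hprop, hdom⟩ := hmem
    have hcover : ∀ v, v ∈ C 0 ∨ v ∈ C 1 := by
      intro v
      obtain ⟨i, hi, -⟩ := hprop.1 v
      fin_cases i
      · exact Or.inl hi
      · exact Or.inr hi
    have hdisj : ∀ v, v ∈ C 0 → v ∈ C 1 → False := by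
      intro v h0 h1
      obtain ⟨i, -, huniq⟩ := hprop.1 v
      exact absurd ((huniq 0 h0).trans (huniq 1 h1).symm) (by decide)
    have hind := hprop.2.2
    have key0 : ∀ v ∈ C 0, (∀ u ∈ C 0, u = v) ∨ ∀ y ∈ C 1, G.Adj v y := by
      intro v hv
      obtain ⟨i, hi⟩ := hdom v
      fin_cases i
      · left
        intro u hu
        rcases hi u hu with h' | h'
        · exact h'
        · exact absurd h' (hind 0 v hv u hu)
      · right
        intro y hy
        rcases hi y hy with h' | h'
        · exact absurd (h' ▸ hy) (fun hc => hdisj v hv hc)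
        · exact h'
    have key1 : ∀ v ∈ C 1, (∀ u ∈ C 1, u = v) ∨ ∀ y ∈ C 0, G.Adj v y := by
      intro v hv
      obtain ⟨i, hi⟩ := hdom v
      fin_cases i
      · right
        intro y hy
        rcases hi y hy with h' | h'
        · exact absurd (h' ▸ hy) (fun hc => hdisj v hc hv)
        · exact h'
      · left
        intro u hu
        rcases hi u hu with h' | h'
        · exact h'
        · exact absurd h' (hind 1 v hv u hu)
    have hadj : ∀ x ∈ C 0, ∀ y ∈ C 1, G.Adj x y := by
      intro x hx y hy
      rcases key0 x hx with h0 | h0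
      · rcases key1 y hy with h1 | h1
        · -- both classes are singletons, use connectivity
          have hxy : x ≠ y := fun he => hdisj x hx (he ▸ hy)
          obtain ⟨w⟩ := hconn.preconnected x y
          cases w with
          | nil => exact absurd rfl hxy
          | @cons _ b _ hxb p =>
            rcases hcover b with hb | hb
            · exact absurd (h0 b hb).symm (G.ne_of_adj hxb)
            · exact (h1 b hb) ▸ hxb
        · exact (h1 x hx).symm
      · exact h0 y hy
    -- build the isomorphism
    have hC0ne := hprop.2.1 0
    have hC1ne := hprop.2.1 1
    haveI : Fintype ↥(C 0) := Fintype.ofFinite _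
    haveI : Fintype ↥((C 0)ᶜ) := Fintype.ofFinite _
    have hcompl : ∀ v, v ∈ C 1 ↔ v ∉ C 0 := by
      intro v
      constructor
      · intro h1 h0; exact hdisj v h0 h1
      · intro h0
        rcases hcover v with h' | h'
        · exact absurd h' h0
        · exact h'
    refine ⟨Fintype.card ↥(C 0), Fintype.card ↥((C 0)ᶜ), ?_, ?_, ⟨?_⟩⟩
    · obtain ⟨v, hv⟩ := hC0ne
      exact Fintype.card_pos_iff.mpr ⟨⟨v, hv⟩⟩
    · obtain ⟨v, hv⟩ := hC1ne
      exact Fintype.card_pos_iff.mpr ⟨⟨v, (hcompl v).mp hv⟩⟩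
    · set e : V ≃ Fin (Fintype.card ↥(C 0)) ⊕ Fin (Fintype.card ↥((C 0)ᶜ)) :=
        (Equiv.Set.sumCompl (C 0)).symm.trans
          (Equiv.sumCongr (Fintype.equivFin _) (Fintype.equivFin _)) with he
      refine ⟨e, ?_⟩
      intro x y
      have hex : ∀ v, v ∈ C 0 → ∃ p, e v = Sum.inl p := by
        intro v hv
        refine ⟨Fintype.equivFin _ ⟨v, hv⟩, ?_⟩
        simp [he, Equiv.Set.sumCompl_symm_apply_of_mem hv]
      have hex' : ∀ v, v ∈ C 1 → ∃ p, e v = Sum.inr p := by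
        intro v hv
        refine ⟨Fintype.equivFin _ ⟨v, (hcompl v).mp hv⟩, ?_⟩
        simp [he, Equiv.Set.sumCompl_symm_apply_of_notMem ((hcompl v).mp hv)]
      show (completeBipartiteGraph _ _).Adj (e x) (e y) ↔ G.Adj x y
      rcases hcover x with hx | hx <;> rcases hcover y with hy | hy
      · obtain ⟨p, hp⟩ := hex x hx
        obtain ⟨q, hq⟩ := hex y hy
        rw [hp, hq]
        simp only [completeBipartiteGraph]
        constructor
        · rintro (⟨h1, h2⟩ | ⟨h1, h2⟩) <;> simp at h1 h2
        · intro hadj'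
          exact absurd hadj' (hind 0 x hx y hy)
      · obtain ⟨p, hp⟩ := hex x hx
        obtain ⟨q, hq⟩ := hex' y hy
        rw [hp, hq]
        simp only [completeBipartiteGraph]
        constructor
        · intro _; exact hadj x hx y hy
        · intro _; left; exact ⟨rfl, rfl⟩
      · obtain ⟨p, hp⟩ := hex' x hx
        obtain ⟨q, hq⟩ := hex y hy
        rw [hp, hq]
        simp only [completeBipartiteGraph]
        constructor
        · intro _; exact (hadj y hy x hx).symm
        · intro _; right; exact ⟨rfl, rfl⟩
      · obtain ⟨p, hp⟩ := hex' x hx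
        obtain ⟨q, hq⟩ := hex' y hy
        rw [hp, hq]
        simp only [completeBipartiteGraph]
        constructor
        · rintro (⟨h1, h2⟩ | ⟨h1, h2⟩) <;> simp at h1 h2
        · intro hadj'
          exact absurd hadj' (hind 1 x hx y hy)
  · rintro ⟨a, b, ha, hb, ⟨e⟩⟩
    set S := {k | ∃ C : Fin k → Set V, IsDominatorColoring G C} with hS
    have hKadj : ∀ x y, G.Adj x y ↔
        (completeBipartiteGraph (Fin a) (Fin b)).Adj (e x) (e y) :=
      fun x y => (e.map_adj_iff).symm
    -- the two-class coloring by sides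
    set C : Fin 2 → Set V :=
      fun i => if i = 0 then {v | (e v).isLeft} else {v | (e v).isRight} with hCdef
    have hmem0 : ∀ v, v ∈ C 0 ↔ (e v).isLeft := fun v => by simp [hCdef]
    have hmem1 : ∀ v, v ∈ C 1 ↔ (e v).isRight := fun v => by simp [hCdef]
    have h2 : 2 ∈ S := by
      refine ⟨C, ⟨?_, ?_, ?_⟩, ?_⟩
      · intro v
        cases hev : e v with
        | inl p =>
          refine ⟨0, (hmem0 v).mpr (by simp [hev]), ?_⟩
          intro i hi
          fin_cases i
          · rfl
          · exact absurd ((hmem1 v).mp hi) (by simp [hev])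
        | inr p =>
          refine ⟨1, (hmem1 v).mpr (by simp [hev]), ?_⟩
          intro i hi
          fin_cases i
          · exact absurd ((hmem0 v).mp hi) (by simp [hev])
          · rfl
      · intro i
        fin_cases i
        · exact ⟨e.symm (Sum.inl ⟨0, ha⟩), (hmem0 _).mpr (by simp)⟩
        · exact ⟨e.symm (Sum.inr ⟨0, hb⟩), (hmem1 _).mpr (by simp)⟩
      · intro i u hu w hw hadj'
        rw [hKadj] at hadj'
        fin_cases i
        · obtain ⟨p, hp⟩ := Sum.isLeft_iff.mp ((hmem0 u).mp hu)
          obtain ⟨q, hq⟩ := Sum.isLeft_iff.mp ((hmem0 w).mp hw)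
          rw [hp, hq] at hadj'
          simp [completeBipartiteGraph] at hadj'
        · obtain ⟨p, hp⟩ := Sum.isRight_iff.mp ((hmem1 u).mp hu)
          obtain ⟨q, hq⟩ := Sum.isRight_iff.mp ((hmem1 w).mp hw)
          rw [hp, hq] at hadj'
          simp [completeBipartiteGraph] at hadj'
      · intro v
        cases hev : e v with
        | inl p =>
          refine ⟨1, ?_⟩
          intro u hu
          right
          obtain ⟨q, hq⟩ := Sum.isRight_iff.mp ((hmem1 u).mp hu)
          rw [hKadj, hev, hq]
          simp [completeBipartiteGraph]
        | inr p =>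
          refine ⟨0, ?_⟩
          intro u hu
          right
          obtain ⟨q, hq⟩ := Sum.isLeft_iff.mp ((hmem0 u).mp hu)
          rw [hKadj, hev, hq]
          simp [completeBipartiteGraph]
    have h0 : 0 ∉ S := by
      rintro ⟨C', hC', -⟩
      obtain ⟨i, -, -⟩ := hC'.1 (e.symm (Sum.inl ⟨0, ha⟩))
      exact i.elim0
    have h1 : 1 ∉ S := by
      rintro ⟨C', hC', -⟩
      set u := e.symm (Sum.inl ⟨0, ha⟩) with hu
      set w := e.symm (Sum.inr ⟨0, hb⟩) with hw
      have huw : G.Adj u w := by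
        rw [hKadj, hu, hw, e.apply_symm_apply, e.apply_symm_apply]
        simp [completeBipartiteGraph]
      obtain ⟨i, hi, -⟩ := hC'.1 u
      obtain ⟨j, hj, -⟩ := hC'.1 w
      fin_cases i; fin_cases j
      exact hC'.2.2 0 u hi w hj huw
    show sInf S = 2
    refine le_antisymm (Nat.sInf_le h2) ?_
    refine le_csInf ⟨2, h2⟩ ?_
    intro m hm
    by_contra hlt
    push_neg at hlt
    interval_cases m
    · exact h0 hm
    · exact h1 hm
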